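/- Let x* = −G·(b₁; b₂). Then x* solves the linearly constrained least-squares problem: for every feasible vector x ∈ ℝⁿ (i.e., every x with B·x + b₂ = 0), one has ‖b₁ + A·x*‖₂ ≤ ‖b₁ + A·x‖₂. -/

import Mathlib

open Matrix

/-- Optimality of `x* = -G·(b₁; b₂)` for the linearly constrained least-squares
problem: for every feasible `x` (i.e. `B·x + b₂ = 0`), `‖b₁ + A·x*‖₂ ≤ ‖b₁ + A·x‖₂`. -/
theorem optimality_of_condensed_solution
    (n N r : ℕ) (hn : 0 < n) (hN : 0 < N) (hr : 0 < r)
    (A : Matrix (Fin N) (Fin n) ℝ) (B : Matrix (Fin r) (Fin n) ℝ)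
    (M : Matrix (Fin n ⊕ Fin r) (Fin n ⊕ Fin r) ℝ)
    (hM : M = Matrix.fromBlocks (Aᵀ * A) Bᵀ B 0)
    (hMinv : IsUnit M)
    (G : Matrix (Fin n) (Fin N ⊕ Fin r) ℝ)
    (hG : G = _root_.Matrix.fromCols (1 : Matrix (Fin n) (Fin n) ℝ) (0 : Matrix (Fin n) (Fin r) ℝ) * M⁻¹ *
        Matrix.fromBlocks Aᵀ 0 0 (1 : Matrix (Fin r) (Fin r) ℝ))
    (b₁ : Fin N → ℝ) (b₂ : Fin r → ℝ)
    (xstar : Fin n → ℝ) (hx : xstar = -(G.mulVec (Sum.elim b₁ b₂))) :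
    ∀ x : Fin n → ℝ, B.mulVec x + b₂ = 0 →
      ‖(EuclideanSpace.equiv (Fin N) ℝ).symm (b₁ + A.mulVec xstar)‖ ≤
        ‖(EuclideanSpace.equiv (Fin N) ℝ).symm (b₁ + A.mulVec x)‖ := by
  intro x hfeas
  have hMdet : IsUnit M.det := (Matrix.isUnit_iff_isUnit_det M).mp hMinv
  set u : Fin n ⊕ Fin r → ℝ := Sum.elim (Aᵀ.mulVec b₁) b₂ with hu
  set w : Fin n ⊕ Fin r → ℝ := M⁻¹.mulVec u with hw
  have hMw : M.mulVec w = u := by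
    rw [hw, mulVec_mulVec, Matrix.mul_nonsing_inv _ hMdet, one_mulVec]
  set x₀ : Fin n → ℝ := w ∘ Sum.inl with hx₀
  set lam : Fin r → ℝ := w ∘ Sum.inr with hlam
  have hw' : w = Sum.elim x₀ lam := (Sum.elim_comp_inl_inr w).symm
  have hblocks := hMw
  rw [hM, hw', Matrix.fromBlocks_mulVec] at hblocks
  have h1 : (Aᵀ*A).mulVec x₀ + Bᵀ.mulVec lam = Aᵀ.mulVec b₁ := by
    funext i; exact congrFun hblocks (Sum.inl i)
  have h2 : B.mulVec x₀ = b₂ := by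
    funext i
    have := congrFun hblocks (Sum.inr i)
    simpa [hu] using this
  have hxstar : xstar = -x₀ := by
    rw [hx, hG]
    congr 1
    rw [← Matrix.mulVec_mulVec, ← Matrix.mulVec_mulVec]
    have e1 : (Matrix.fromBlocks Aᵀ 0 0 (1 : Matrix (Fin r) (Fin r) ℝ)).mulVec
        (Sum.elim b₁ b₂) = u := by
      rw [Matrix.fromBlocks_mulVec]
      simp [hu]
    rw [e1, ← hw, hw', Matrix.fromCols_mulVec_sumElim]
    simp
  have hAt : Aᵀ.mulVec (b₁ + A.mulVec xstar) = Bᵀ.mulVec lam := by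
    rw [hxstar]
    have h3 : (Aᵀ*A).mulVec x₀ = Aᵀ.mulVec b₁ - Bᵀ.mulVec lam := by
      rw [← h1]; abel
    rw [Matrix.mulVec_neg, Matrix.mulVec_add, Matrix.mulVec_neg,
      Matrix.mulVec_mulVec, h3]
    abel
  have hBd : B.mulVec (x - xstar) = 0 := by
    rw [Matrix.mulVec_sub, hxstar, Matrix.mulVec_neg, h2,
      show B.mulVec x = -b₂ from eq_neg_of_add_eq_zero_left hfeas]
    simp
  set d : Fin n → ℝ := x - xstar with hd
  have horth : A.mulVec d ⬝ᵥ (b₁ + A.mulVec xstar) = 0 := by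
    rw [dotProduct_comm, Matrix.dotProduct_mulVec, ← Matrix.mulVec_transpose, hAt,
      Matrix.mulVec_transpose, ← Matrix.dotProduct_mulVec, hBd, dotProduct_zero]
  have hx_eq : b₁ + A.mulVec x = (b₁ + A.mulVec xstar) + A.mulVec d := by
    rw [hd, Matrix.mulVec_sub]; abel
  set y : Fin N → ℝ := b₁ + A.mulVec xstar with hy
  set z : Fin N → ℝ := A.mulVec d with hz
  have key : y ⬝ᵥ y ≤ (b₁ + A.mulVec x) ⬝ᵥ (b₁ + A.mulVec x) := by
    rw [hx_eq]
    have hnn : (0:ℝ) ≤ z ⬝ᵥ z := Finset.sum_nonneg fun i _ => mul_self_nonneg _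
    have expand : (y + z) ⬝ᵥ (y + z) = y ⬝ᵥ y + 2 * (z ⬝ᵥ y) + z ⬝ᵥ z := by
      simp only [add_dotProduct, dotProduct_add, dotProduct_comm y z]
      ring
    rw [expand, horth]
    linarith
  rw [EuclideanSpace.norm_eq, EuclideanSpace.norm_eq]
  apply Real.sqrt_le_sqrt
  simpa [dotProduct, sq] using key
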